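/- Let B₁ be a real m×n matrix and B₂ be a real n×p matrix with B₁B₂ = 0. Let D₀, D₁, D₂ be diagonal matrices of sizes m, n, p respectively whose diagonal entries are all +1 or −1, and set B̃₁ = D₀B₁D₁ and B̃₂ = D₁B₂D₂. Then B̃₁B̃₂ = 0, and for any coefficients α_0,…,α_{L₁}, β_0,…,β_{L₂}, the simplicial convolutional filter built from B̃₁, B̃₂ satisfies H(B̃₁,B̃₂) = D₁ H(B₁,B₂) D₁, where H(B₁,B₂) = Σ_{l=0}^{L₁} α_l (B₁ᵀB₁)^l + Σ_{l=0}^{L₂} β_l (B₂B₂ᵀ)^l. -/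
import Mathlib


open Matrix Finset

/-- A simplicial convolutional filter built from incidence matrices `B₁`, `B₂`:
`H = Σ_{l=0}^{L₁} α l • (B₁ᵀB₁)^l + Σ_{l=0}^{L₂} β l • (B₂B₂ᵀ)^l`. -/
noncomputable def scFilter {m n p : ℕ} (B₁ : Matrix (Fin m) (Fin n) ℝ)
    (B₂ : Matrix (Fin n) (Fin p) ℝ) (L₁ L₂ : ℕ) (α β : ℕ → ℝ) :
    Matrix (Fin n) (Fin n) ℝ :=
  (∑ l ∈ Finset.range (L₁ + 1), α l • (B₁ᵀ * B₁) ^ l)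
    + ∑ l ∈ Finset.range (L₂ + 1), β l • (B₂ * B₂ᵀ) ^ l

private lemma scf_diag_sq {k : ℕ} (d : Fin k → ℝ) (hd : ∀ i, d i = 1 ∨ d i = -1) :
    Matrix.diagonal d * Matrix.diagonal d = 1 := by
  rw [Matrix.diagonal_mul_diagonal]
  have : (fun i => d i * d i) = fun _ => (1:ℝ) := by
    funext i; rcases hd i with h | h <;> simp [h]
  rw [this, Matrix.diagonal_one]

private lemma scf_conj_pow {k : ℕ} (D M : Matrix (Fin k) (Fin k) ℝ)
    (hD : D * D = 1) (l : ℕ) : (D * M * D) ^ l = D * M ^ l * D := by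
  induction l with
  | zero => simp [hD]
  | succ l ih =>
      rw [pow_succ, pow_succ, ih]
      rw [show D * M ^ l * D * (D * M * D) = D * M ^ l * (D * D) * M * D by
        noncomm_ring, hD]
      noncomm_ring

theorem filter_orientation_equivariance
    {m n p : ℕ} (B₁ : Matrix (Fin m) (Fin n) ℝ) (B₂ : Matrix (Fin n) (Fin p) ℝ)
    (hB : B₁ * B₂ = 0)
    (d₀ : Fin m → ℝ) (d₁ : Fin n → ℝ) (d₂ : Fin p → ℝ)
    (hd₀ : ∀ i, d₀ i = 1 ∨ d₀ i = -1)
    (hd₁ : ∀ i, d₁ i = 1 ∨ d₁ i = -1)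
    (hd₂ : ∀ i, d₂ i = 1 ∨ d₂ i = -1)
    (L₁ L₂ : ℕ) (α β : ℕ → ℝ) :
    (Matrix.diagonal d₀ * B₁ * Matrix.diagonal d₁) *
        (Matrix.diagonal d₁ * B₂ * Matrix.diagonal d₂) = 0 ∧
    scFilter (Matrix.diagonal d₀ * B₁ * Matrix.diagonal d₁)
        (Matrix.diagonal d₁ * B₂ * Matrix.diagonal d₂) L₁ L₂ α β =
      Matrix.diagonal d₁ * scFilter B₁ B₂ L₁ L₂ α β * Matrix.diagonal d₁ := by
  set D₀ := Matrix.diagonal d₀ with hD₀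
  set D₁ := Matrix.diagonal d₁ with hD₁
  set D₂ := Matrix.diagonal d₂ with hD₂
  have h0 : D₀ * D₀ = 1 := scf_diag_sq d₀ hd₀
  have h1 : D₁ * D₁ = 1 := scf_diag_sq d₁ hd₁
  have h2 : D₂ * D₂ = 1 := scf_diag_sq d₂ hd₂
  have hzero : (D₀ * B₁ * D₁) * (D₁ * B₂ * D₂) = 0 := by
    calc (D₀ * B₁ * D₁) * (D₁ * B₂ * D₂)
        = D₀ * B₁ * (D₁ * D₁) * (B₂ * D₂) := by
          simp only [Matrix.mul_assoc]
      _ = 0 := by rw [h1]; simp only [Matrix.mul_one, Matrix.mul_assoc,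
            ← Matrix.mul_assoc B₁ B₂, hB]; simp
  refine ⟨hzero, ?_⟩
  have hT1 : (D₀ * B₁ * D₁)ᵀ * (D₀ * B₁ * D₁) = D₁ * (B₁ᵀ * B₁) * D₁ := by
    simp only [Matrix.transpose_mul, Matrix.diagonal_transpose, ← hD₀, ← hD₁]
    calc D₁ᵀ * (B₁ᵀ * D₀ᵀ) * (D₀ * B₁ * D₁)
        = D₁ᵀ * B₁ᵀ * (D₀ᵀ * D₀) * (B₁ * D₁) := by simp only [Matrix.mul_assoc]
      _ = D₁ * (B₁ᵀ * B₁) * D₁ := by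
          rw [hD₀, hD₁, Matrix.diagonal_transpose, Matrix.diagonal_transpose,
            ← hD₀, ← hD₁, h0]
          simp only [Matrix.mul_one, Matrix.mul_assoc]
  have hT2 : (D₁ * B₂ * D₂) * (D₁ * B₂ * D₂)ᵀ = D₁ * (B₂ * B₂ᵀ) * D₁ := by
    simp only [Matrix.transpose_mul, Matrix.diagonal_transpose, ← hD₁, ← hD₂]
    calc D₁ * B₂ * D₂ * (D₂ᵀ * (B₂ᵀ * D₁ᵀ))
        = D₁ * B₂ * (D₂ * D₂ᵀ) * (B₂ᵀ * D₁ᵀ) := by simp only [Matrix.mul_assoc]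
      _ = D₁ * (B₂ * B₂ᵀ) * D₁ := by
          rw [hD₁, hD₂, Matrix.diagonal_transpose, Matrix.diagonal_transpose,
            ← hD₁, ← hD₂, h2]
          simp only [Matrix.mul_one, Matrix.mul_assoc]
  unfold scFilter
  rw [hT1, hT2]
  rw [mul_add, add_mul, Finset.mul_sum, Finset.mul_sum,
    Finset.sum_mul, Finset.sum_mul]
  congr 1
  all_goals
    refine Finset.sum_congr rfl fun l _ => ?_
    rw [scf_conj_pow _ _ h1]; simp [Matrix.mul_smul, Matrix.smul_mul]
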